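/- Let L be a lexideal in S = K[X_1,...,X_n] containing no power of X_n, let G be the minimal system of monomial generators of L (the monomials of L that are not of the form X_j·w with w a monomial in L), and let L̂ be the ideal generated by the binomials {v − φ(v) : v ∈ G}. Then for every monomial u ∈ L, we have u ≡ φ(u) (mod L̂), i.e., u − φ(u) ∈ L̂. -/
import Mathlib


/-- The degree of a monomial in `K[X_1,…,X_n]`, encoded as its exponent vector
`σ : Fin n →₀ ℕ` (so `σ` encodes `X_1^{σ 0} ⋯ X_n^{σ (n-1)}`). -/
def mdeg {n : ℕ} (σ : Fin n →₀ ℕ) : ℕ := ∑ j, σ j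

/-- The strict graded lexicographic order on monomials (exponent vectors), for the
variable order `X_1 > ⋯ > X_n` (coordinate `0` corresponds to `X_1`): `u < v` iff
`deg u < deg v`, or the degrees are equal and at the first coordinate where `u, v`
differ, `u` has the smaller exponent. -/
def glexLt {n : ℕ} (u v : Fin n →₀ ℕ) : Prop :=
  mdeg u < mdeg v ∨ (mdeg u = mdeg v ∧ ∃ j : Fin n, u j < v j ∧ ∀ k, k < j → u k = v k)

/-- The graded lexicographic order: `glexLe u v` means `u ≤ v`. -/
def glexLe {n : ℕ} (u v : Fin n →₀ ℕ) : Prop := u = v ∨ glexLt u v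

/-- A lexsegment in degree `i`: a set of monomials of the form `{u ∈ M_i | u ≥ v}`
for some monomial `v` of degree `i`. -/
def IsLexSegment {n : ℕ} (i : ℕ) (C : Set (Fin n →₀ ℕ)) : Prop :=
  ∃ v : Fin n →₀ ℕ, mdeg v = i ∧ C = {u | mdeg u = i ∧ glexLe v u}

/-- A monomial ideal: an ideal generated by monomials. -/
def IsMonomialIdeal {K : Type*} [Field K] {n : ℕ} (J : Ideal (MvPolynomial (Fin n) K)) : Prop :=
  ∃ T : Set (Fin n →₀ ℕ), J = Ideal.span ((fun σ => MvPolynomial.monomial σ (1 : K)) '' T)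

/-- A lexideal: a monomial ideal `L` such that, for every `i ≥ 1` with `L ∩ M_i ≠ ∅`,
the set of degree-`i` monomials of `L` is a lexsegment. -/
def IsLexIdeal {K : Type*} [Field K] {n : ℕ} (L : Ideal (MvPolynomial (Fin n) K)) : Prop :=
  IsMonomialIdeal L ∧ ∀ i : ℕ, 1 ≤ i →
    ({σ : Fin n →₀ ℕ | mdeg σ = i ∧ MvPolynomial.monomial σ (1 : K) ∈ L}).Nonempty →
    IsLexSegment i {σ : Fin n →₀ ℕ | mdeg σ = i ∧ MvPolynomial.monomial σ (1 : K) ∈ L}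

/-- The map `φ : u ↦ u·X_n/X_{min(u)}` on nonconstant monomials, where `min(u)` is the
least index of a variable dividing `u` (and `X_n` is the last variable). On the zero
exponent vector (the monomial `1`), `φ` is the identity by convention. -/
noncomputable def phi {n : ℕ} (hn : 0 < n) (σ : Fin n →₀ ℕ) : Fin n →₀ ℕ :=
  if h : σ.support.Nonempty then
    σ - Finsupp.single (σ.support.min' h) 1 + Finsupp.single ⟨n - 1, Nat.sub_lt hn Nat.one_pos⟩ 1
  else σ

/-- The minimal system of monomial generators of a monomial ideal `L`: the monomials of
`L` that are not of the form `X_j·w` with `w` a monomial of `L`. -/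
def minGens {K : Type*} [Field K] {n : ℕ} (L : Ideal (MvPolynomial (Fin n) K)) :
    Set (Fin n →₀ ℕ) :=
  {σ | MvPolynomial.monomial σ (1 : K) ∈ L ∧
    ¬ ∃ (j : Fin n) (τ : Fin n →₀ ℕ),
        MvPolynomial.monomial τ (1 : K) ∈ L ∧ σ = τ + Finsupp.single j 1}

lemma glexLt_trans' {n : ℕ} {a b c : Fin n →₀ ℕ} (h1 : glexLt a b) (h2 : glexLt b c) :
    glexLt a c := by
  rcases h1 with h1 | ⟨hd1, j1, hj1, hk1⟩
  · rcases h2 with h2 | ⟨hd2, _⟩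
    · exact Or.inl (h1.trans h2)
    · exact Or.inl (hd2 ▸ h1)
  · rcases h2 with h2 | ⟨hd2, j2, hj2, hk2⟩
    · exact Or.inl (hd1 ▸ h2)
    · refine Or.inr ⟨hd1.trans hd2, ?_⟩
      rcases lt_trichotomy j1 j2 with h | h | h
      · exact ⟨j1, by rw [← hk2 j1 h]; exact hj1,
          fun k hk => (hk1 k hk).trans (hk2 k (hk.trans h))⟩
      · subst h
        exact ⟨j1, hj1.trans hj2, fun k hk => (hk1 k hk).trans (hk2 k hk)⟩
      · exact ⟨j2, (hk1 j2 h) ▸ hj2,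
          fun k hk => (hk1 k (hk.trans h)).trans (hk2 k hk)⟩

lemma mdeg_add {n : ℕ} (a b : Fin n →₀ ℕ) : mdeg (a + b) = mdeg a + mdeg b := by
  simp [mdeg, Finsupp.add_apply, Finset.sum_add_distrib]

lemma mdeg_single {n : ℕ} (j : Fin n) : mdeg (Finsupp.single j 1) = 1 := by
  simp [mdeg, Finsupp.single_apply]

lemma mdeg_pos {n : ℕ} {σ : Fin n →₀ ℕ} (h : σ.support.Nonempty) : 1 ≤ mdeg σ := by
  obtain ⟨k, hk⟩ := h
  have h1 : 1 ≤ σ k := Nat.one_le_iff_ne_zero.2 (Finsupp.mem_support_iff.mp hk)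
  exact h1.trans (Finset.single_le_sum (fun _ _ => Nat.zero_le _) (Finset.mem_univ k))

lemma phi_eq {n : ℕ} (hn : 0 < n) (σ : Fin n →₀ ℕ) (h : σ.support.Nonempty) :
    phi hn σ = σ - Finsupp.single (σ.support.min' h) 1
      + Finsupp.single ⟨n - 1, Nat.sub_lt hn Nat.one_pos⟩ 1 := by
  simp only [phi]
  rw [dif_pos h]

/-- Let `L` be a lexideal in `S = K[X_1,…,X_n]` containing no power of `X_n`, let `G` be
the minimal system of monomial generators of `L`, and `L̂` the ideal generated by the
binomials `{v − φ(v) : v ∈ G}`. Then for every monomial `u ∈ L` we have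
`u ≡ φ(u) (mod L̂)`, i.e. `u − φ(u) ∈ L̂`. -/
theorem stmt14 (K : Type*) [Field K] (n : ℕ) (hn : 0 < n)
    (L : Ideal (MvPolynomial (Fin n) K)) (hlex : IsLexIdeal L)
    (hXn : ∀ k : ℕ,
      (MvPolynomial.X (⟨n - 1, Nat.sub_lt hn Nat.one_pos⟩ : Fin n) : MvPolynomial (Fin n) K) ^ k
        ∉ L) :
    ∀ σ : Fin n →₀ ℕ, MvPolynomial.monomial σ (1 : K) ∈ L →
      MvPolynomial.monomial σ (1 : K) - MvPolynomial.monomial (phi hn σ) (1 : K) ∈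
        Ideal.span ((fun v => MvPolynomial.monomial v (1 : K)
          - MvPolynomial.monomial (phi hn v) (1 : K)) '' minGens L) := by
  classical
  set last : Fin n := ⟨n - 1, Nat.sub_lt hn Nat.one_pos⟩ with hlast
  set Lhat := Ideal.span ((fun v => MvPolynomial.monomial v (1 : K)
          - MvPolynomial.monomial (phi hn v) (1 : K)) '' minGens L) with hLhat
  suffices H : ∀ d : ℕ, ∀ σ : Fin n →₀ ℕ, mdeg σ = d →
      MvPolynomial.monomial σ (1 : K) ∈ L →
      MvPolynomial.monomial σ (1 : K) - MvPolynomial.monomial (phi hn σ) (1 : K) ∈ Lhat by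
    intro σ hσ
    exact H (mdeg σ) σ rfl hσ
  intro d
  induction d using Nat.strong_induction_on with
  | _ d ih =>
  intro σ hd hσ
  by_cases hG : σ ∈ minGens L
  · exact Ideal.subset_span ⟨σ, hG, rfl⟩
  · simp only [minGens, Set.mem_setOf_eq, not_and, not_not] at hG
    obtain ⟨j, τ, hτ, rfl⟩ := hG hσ
    have hτ0 : τ ≠ 0 := by
      rintro rfl
      exact hXn 0 (by simpa using hτ)
    have hτne : τ.support.Nonempty := Finsupp.support_nonempty_iff.mpr hτ0
    set m := τ.support.min' hτne with hm
    have hτm : 1 ≤ τ m :=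
      Nat.one_le_iff_ne_zero.2 (Finsupp.mem_support_iff.mp (τ.support.min'_mem hτne))
    have hmle : ∀ k ∈ τ.support, m ≤ k := fun k hk => τ.support.min'_le k hk
    have hdτ : mdeg τ < d := by
      rw [← hd, mdeg_add, mdeg_single]; omega
    have ihτ := ih (mdeg τ) hdτ τ rfl hτ
    have hsuppne : (τ + Finsupp.single j 1).support.Nonempty := by
      refine ⟨m, Finsupp.mem_support_iff.mpr ?_⟩
      simp only [Finsupp.add_apply]
      omega
    rcases le_or_gt m j with hmj | hjm
    · -- Case j ≥ m : φ(τ + e_j) = φ(τ) + e_j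
      have hmin : (τ + Finsupp.single j 1).support.min' hsuppne = m := by
        apply le_antisymm
        · exact Finset.min'_le _ _ (Finsupp.mem_support_iff.mpr (by
            simp only [Finsupp.add_apply]; omega))
        · apply Finset.le_min'
          intro k hk
          have hk' := Finsupp.mem_support_iff.mp hk
          rw [Finsupp.add_apply] at hk'
          by_cases h : τ k = 0
          · have hjk : Finsupp.single j 1 k ≠ 0 := by omega
            have : j = k := by
              by_contra hne
              rw [Finsupp.single_apply, if_neg hne] at hjk
              exact hjk rfl
            exact this ▸ hmj
          · exact hmle k (Finsupp.mem_support_iff.mpr h)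
      have hphi1 : phi hn (τ + Finsupp.single j 1) = phi hn τ + Finsupp.single j 1 := by
        rw [phi_eq hn _ hsuppne, phi_eq hn τ hτne, hmin, ← hm, ← hlast]
        ext k
        simp only [Finsupp.add_apply, Finsupp.tsub_apply, Finsupp.single_apply]
        split_ifs <;> (try subst_vars) <;> omega
      have heq : MvPolynomial.monomial (τ + Finsupp.single j 1) (1 : K)
          - MvPolynomial.monomial (phi hn (τ + Finsupp.single j 1)) (1 : K)
          = MvPolynomial.monomial (Finsupp.single j 1) (1 : K)
            * (MvPolynomial.monomial τ (1 : K) - MvPolynomial.monomial (phi hn τ) (1 : K)) := by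
        rw [hphi1, mul_sub, MvPolynomial.monomial_mul, MvPolynomial.monomial_mul, one_mul,
          add_comm (Finsupp.single j 1) τ, add_comm (Finsupp.single j 1) (phi hn τ)]
      rw [heq]
      exact Ideal.mul_mem_left _ _ ihτ
    · -- Case j < m
      set τ' := τ - Finsupp.single m 1 + Finsupp.single j 1 with hτ'def
      have hle : Finsupp.single m 1 ≤ τ := Finsupp.single_le_iff.mpr hτm
      have hcancel : τ - Finsupp.single m 1 + Finsupp.single m 1 = τ :=
        tsub_add_cancel_of_le hle
      have hkey : τ' + Finsupp.single m 1 = τ + Finsupp.single j 1 := by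
        rw [hτ'def]
        calc τ - Finsupp.single m 1 + Finsupp.single j 1 + Finsupp.single m 1
            = τ - Finsupp.single m 1 + Finsupp.single m 1 + Finsupp.single j 1 :=
              add_right_comm _ _ _
          _ = τ + Finsupp.single j 1 := by rw [hcancel]
      have hdeg' : mdeg τ' = mdeg τ := by
        have h1 := congrArg mdeg hkey
        rw [mdeg_add τ' (Finsupp.single m 1), mdeg_add τ (Finsupp.single j 1),
          mdeg_single, mdeg_single] at h1
        omega
      have hτ'j : τ' j = τ j + 1 := by
        rw [hτ'def, Finsupp.add_apply, Finsupp.tsub_apply, Finsupp.single_apply,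
          Finsupp.single_apply, if_neg (ne_of_gt hjm), if_pos rfl]
        have hτj : τ j = 0 := by
          by_contra h
          exact absurd (hmle j (Finsupp.mem_support_iff.mpr h)) (not_le.mpr hjm)
        omega
      have hτ'k : ∀ k, k ≠ m → k ≠ j → τ' k = τ k := by
        intro k hkm hkj
        rw [hτ'def, Finsupp.add_apply, Finsupp.tsub_apply, Finsupp.single_apply,
          Finsupp.single_apply, if_neg (fun h => hkm h.symm), if_neg (fun h => hkj h.symm)]
        omega
      have hlt : glexLt τ τ' := by
        refine Or.inr ⟨hdeg'.symm, j, ?_, ?_⟩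
        · omega
        · intro k hk
          have hkj : k ≠ j := ne_of_lt hk
          have hkm : k ≠ m := ne_of_lt (hk.trans hjm)
          exact (hτ'k k hkm hkj).symm
      -- τ' ∈ L by the lexsegment property
      have hτ'L : MvPolynomial.monomial τ' (1 : K) ∈ L := by
        obtain ⟨v, hv, hset⟩ := hlex.2 (mdeg τ) (mdeg_pos hτne) ⟨τ, rfl, hτ⟩
        have hτin : τ ∈ {σ : Fin n →₀ ℕ | mdeg σ = mdeg τ ∧
            MvPolynomial.monomial σ (1 : K) ∈ L} := ⟨rfl, hτ⟩
        rw [hset] at hτin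
        have hvle : glexLe v τ' := by
          rcases hτin.2 with rfl | h
          · exact Or.inr hlt
          · exact Or.inr (glexLt_trans' h hlt)
        have : τ' ∈ {u : Fin n →₀ ℕ | mdeg u = mdeg τ ∧ glexLe v u} := ⟨hdeg', hvle⟩
        rw [← hset] at this
        exact this.2
      have hτ'ne : τ'.support.Nonempty :=
        ⟨j, Finsupp.mem_support_iff.mpr (by omega)⟩
      have hmin' : τ'.support.min' hτ'ne = j := by
        apply le_antisymm
        · exact Finset.min'_le _ _ (Finsupp.mem_support_iff.mpr (by omega))
        · apply Finset.le_min'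
          intro k hk
          have hk' := Finsupp.mem_support_iff.mp hk
          by_cases hkj : k = j
          · exact le_of_eq hkj.symm
          · by_cases hkm : k = m
            · exact le_of_lt (hkm ▸ hjm)
            · have := hτ'k k hkm hkj
              have hkτ : τ k ≠ 0 := by omega
              exact le_of_lt (hjm.trans_le (hmle k (Finsupp.mem_support_iff.mpr hkτ)))
      have hphiτ' : phi hn τ' = phi hn τ := by
        rw [phi_eq hn τ' hτ'ne, phi_eq hn τ hτne, hmin', ← hm, ← hlast, hτ'def,
          add_tsub_cancel_right]
      have hminσ : (τ + Finsupp.single j 1).support.min' hsuppne = j := by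
        apply le_antisymm
        · apply Finset.min'_le
          apply Finsupp.mem_support_iff.mpr
          rw [Finsupp.add_apply, Finsupp.single_apply, if_pos rfl]
          omega
        · apply Finset.le_min'
          intro k hk
          have hk' := Finsupp.mem_support_iff.mp hk
          rw [Finsupp.add_apply] at hk'
          by_cases hkj : k = j
          · exact le_of_eq hkj.symm
          · have hjk : Finsupp.single j 1 k = 0 := by
              rw [Finsupp.single_apply, if_neg (fun h => hkj h.symm)]
            have hkτ : τ k ≠ 0 := by omega
            exact le_of_lt (hjm.trans_le (hmle k (Finsupp.mem_support_iff.mpr hkτ)))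
      have hphiσ : phi hn (τ + Finsupp.single j 1) = Finsupp.single last 1 + τ := by
        rw [phi_eq hn _ hsuppne, hminσ, ← hlast, add_tsub_cancel_right, add_comm]
      have h2 : Finsupp.single j 1 + phi hn τ = Finsupp.single last 1 + τ' := by
        rw [phi_eq hn τ hτne, ← hm, ← hlast, hτ'def]
        ext k
        simp only [Finsupp.add_apply, Finsupp.tsub_apply, Finsupp.single_apply]
        split_ifs <;> omega
      have hdτ' : mdeg τ' < d := hdeg' ▸ hdτ
      have ihτ' := ih (mdeg τ') hdτ' τ' rfl hτ'L
      have hA : MvPolynomial.monomial (Finsupp.single j 1) (1 : K)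
          * (MvPolynomial.monomial τ (1 : K) - MvPolynomial.monomial (phi hn τ) (1 : K))
          ∈ Lhat := Ideal.mul_mem_left _ _ ihτ
      have hB : MvPolynomial.monomial (Finsupp.single last 1) (1 : K)
          * ((MvPolynomial.monomial τ' (1 : K) - MvPolynomial.monomial (phi hn τ') (1 : K))
            - (MvPolynomial.monomial τ (1 : K) - MvPolynomial.monomial (phi hn τ) (1 : K)))
          ∈ Lhat := Ideal.mul_mem_left _ _ (Ideal.sub_mem _ ihτ' ihτ)
      have hsum := Ideal.add_mem _ hA hB
      have heq : MvPolynomial.monomial (τ + Finsupp.single j 1) (1 : K)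
          - MvPolynomial.monomial (phi hn (τ + Finsupp.single j 1)) (1 : K)
          = MvPolynomial.monomial (Finsupp.single j 1) (1 : K)
          * (MvPolynomial.monomial τ (1 : K) - MvPolynomial.monomial (phi hn τ) (1 : K))
          + MvPolynomial.monomial (Finsupp.single last 1) (1 : K)
          * ((MvPolynomial.monomial τ' (1 : K) - MvPolynomial.monomial (phi hn τ') (1 : K))
            - (MvPolynomial.monomial τ (1 : K) - MvPolynomial.monomial (phi hn τ) (1 : K))) := by
        rw [hphiτ', hphiσ]
        simp only [mul_sub, MvPolynomial.monomial_mul, one_mul]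
        rw [h2, add_comm (Finsupp.single j (1 : ℕ)) τ]
        ring
      rw [heq]
      exact hsum
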